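/- For n ≥ 1, 0 < s < 1, the function E^{(s)}(x,y) = (Γ((n−2s)/2)/(4π^{n/2+1−s})) (|x|²+y²)^{−(n−2s)/2} satisfies, for every (x,y) ∈ ℝ^n × (0,∞) with (x,y) ≠ (0,0), the equation ∂²_y E^{(s)} + ((1−2s)/y) ∂_y E^{(s)} + Δ_x E^{(s)} = 0. -/

import Mathlib

open Real MeasureTheory Set

/-- The coordinate Laplacian on `ℝ^n`. -/
noncomputable def lapl (n : ℕ) (f : EuclideanSpace ℝ (Fin n) → ℝ)
    (x : EuclideanSpace ℝ (Fin n)) : ℝ :=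
  ∑ i : Fin n,
    fderiv ℝ (fun z => fderiv ℝ f z (EuclideanSpace.single i (1:ℝ))) x
      (EuclideanSpace.single i (1:ℝ))

/-- The fundamental solution `E^{(s)}(x,y)` in closed form. -/
noncomputable def Efun (n : ℕ) (s : ℝ) (x : EuclideanSpace ℝ (Fin n)) (y : ℝ) : ℝ :=
  Real.Gamma (((n:ℝ) - 2*s)/2) / (4 * π ^ ((n:ℝ)/2 + 1 - s))
    * (‖x‖^2 + y^2) ^ (-(((n:ℝ) - 2*s)/2))

theorem stmt_15 (n : ℕ) (hn : 1 ≤ n) (s : ℝ) (hs0 : 0 < s) (hs1 : s < 1)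
    (x : EuclideanSpace ℝ (Fin n)) (y : ℝ) (hy : 0 < y) (hxy : ¬(x = 0 ∧ y = 0)) :
    deriv (deriv (fun y' => Efun n s x y')) y
      + ((1 - 2*s)/y) * deriv (fun y' => Efun n s x y') y
      + lapl n (fun x' => Efun n s x' y) x = 0 := by
  classical
  set C : ℝ := Real.Gamma (((n:ℝ) - 2*s)/2) / (4 * π ^ ((n:ℝ)/2 + 1 - s)) with hCdef
  set p : ℝ := -(((n:ℝ) - 2*s)/2) with hpdef
  have hE : ∀ (z : EuclideanSpace ℝ (Fin n)) (t : ℝ),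
      Efun n s z t = C * (‖z‖^2 + t^2) ^ p := fun z t => rfl
  have hrpos : ∀ (z : EuclideanSpace ℝ (Fin n)) (t : ℝ), t ≠ 0 → 0 < ‖z‖^2 + t^2 := by
    intro z t ht
    have h1 : (0:ℝ) ≤ ‖z‖^2 := sq_nonneg _
    have h2 : (0:ℝ) < t^2 := by positivity
    linarith
  set r : ℝ := ‖x‖^2 + y^2 with hrdef
  have hr0 : 0 < r := hrpos x y hy.ne'
  -- first derivative in y, at any positive t
  have hd1 : ∀ t : ℝ, 0 < t → HasDerivAt (fun y' => Efun n s x y')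
      ((C*(2*p)) * (t * (‖x‖^2 + t^2)^(p-1))) t := by
    intro t ht
    have h1 : HasDerivAt (fun y' : ℝ => ‖x‖^2 + y'^2) (2*t) t := by
      simpa using (hasDerivAt_pow 2 t).const_add (‖x‖^2)
    have h2 := (h1.rpow_const (p := p) (Or.inl (hrpos x t ht.ne').ne')).const_mul C
    simp only [hE]
    refine h2.congr_deriv ?_
    ring
  have hderiv1 : deriv (fun y' => Efun n s x y') y = (C*(2*p)) * (y * r^(p-1)) :=
    (hd1 y hy).deriv
  -- second derivative in y
  have hev : deriv (fun y' => Efun n s x y') =ᶠ[nhds y]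
      fun t => (C*(2*p)) * (t * (‖x‖^2 + t^2)^(p-1)) := by
    filter_upwards [Ioi_mem_nhds hy] with t ht
    exact (hd1 t ht).deriv
  have hd2 : HasDerivAt (fun t => (C*(2*p)) * (t * (‖x‖^2 + t^2)^(p-1)))
      ((C*(2*p)) * (r^(p-1) + y * (2*y*(p-1)*r^(p-1-1)))) y := by
    have h1 : HasDerivAt (fun y' : ℝ => ‖x‖^2 + y'^2) (2*y) y := by
      simpa using (hasDerivAt_pow 2 y).const_add (‖x‖^2)
    have h2 := h1.rpow_const (p := p-1) (Or.inl hr0.ne')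
    have h3 := ((hasDerivAt_id y).mul h2).const_mul (C*(2*p))
    refine h3.congr_deriv ?_
    simp only [id_eq]
    ring
  have hderiv2 : deriv (deriv (fun y' => Efun n s x y')) y
      = (C*(2*p)) * (r^(p-1) + y * (2*y*(p-1)*r^(p-1-1))) := by
    rw [hev.deriv_eq]
    exact hd2.deriv
  -- spatial derivatives
  have hpos2 : ∀ z : EuclideanSpace ℝ (Fin n), 0 < ‖z‖^2 + y^2 :=
    fun z => hrpos z y hy.ne'
  have hFz : ∀ z : EuclideanSpace ℝ (Fin n),
      HasFDerivAt (fun z' => Efun n s z' y)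
        (C • ((p * (‖z‖^2 + y^2)^(p-1)) • ((2:ℝ) • (innerSL ℝ z)))) z := by
    intro z
    have h1 : HasFDerivAt (fun z' : EuclideanSpace ℝ (Fin n) => ‖z'‖^2 + y^2)
        ((2:ℝ) • (innerSL ℝ z)) z := by
      have h := (hasStrictFDerivAt_norm_sq z).hasFDerivAt.add_const (y^2)
      have heq : ((2:ℝ) • (innerSL ℝ z)) = ((2:ℕ) • (innerSL ℝ z)) := by
        ext v; simp
      rw [heq]; exact h
    have h2 := (h1.rpow_const (p := p) (Or.inl (hpos2 z).ne')).const_mul C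
    simpa only [hE] using h2
  have hg : ∀ (z : EuclideanSpace ℝ (Fin n)) (i : Fin n),
      fderiv ℝ (fun z' => Efun n s z' y) z (EuclideanSpace.single i (1:ℝ))
        = (C*(2*p)) * ((‖z‖^2 + y^2)^(p-1) * z i) := by
    intro z i
    rw [(hFz z).fderiv]
    simp [EuclideanSpace.inner_single_right, innerSL_apply_apply]
    ring
  have hsec : ∀ i : Fin n,
      fderiv ℝ (fun z => fderiv ℝ (fun z' => Efun n s z' y) z
        (EuclideanSpace.single i (1:ℝ))) x (EuclideanSpace.single i (1:ℝ))
      = (C*(2*p)) * (r^(p-1) + (p-1)*r^(p-1-1) * (2 * (x i * x i))) := by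
    intro i
    have hfun : (fun z => fderiv ℝ (fun z' => Efun n s z' y) z
        (EuclideanSpace.single i (1:ℝ)))
        = fun z => (C*(2*p)) * ((‖z‖^2 + y^2)^(p-1) * z i) := funext fun z => hg z i
    rw [hfun]
    have h1 : HasFDerivAt (fun z' : EuclideanSpace ℝ (Fin n) => ‖z'‖^2 + y^2)
        ((2:ℝ) • (innerSL ℝ x)) x := by
      have h := (hasStrictFDerivAt_norm_sq x).hasFDerivAt.add_const (y^2)
      have heq : ((2:ℝ) • (innerSL ℝ x)) = ((2:ℕ) • (innerSL ℝ x)) := by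
        ext v; simp
      rw [heq]; exact h
    have h2 := h1.rpow_const (p := p-1) (Or.inl hr0.ne')
    have hproj : HasFDerivAt (fun z : EuclideanSpace ℝ (Fin n) => z i)
        (EuclideanSpace.proj (𝕜 := ℝ) i) x := (EuclideanSpace.proj (𝕜 := ℝ) i).hasFDerivAt
    have h3 := (h2.mul hproj).const_mul (C*(2*p))
    rw [HasFDerivAt.fderiv (f := fun z : EuclideanSpace ℝ (Fin n) => C * (2 * p) * ((‖z‖ ^ 2 + y ^ 2) ^ (p - 1) * z i)) h3]
    simp [EuclideanSpace.inner_single_right, innerSL_apply_apply]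
    ring
  have hxs : ∑ i : Fin n, x i * x i = ‖x‖^2 := by
    rw [← real_inner_self_eq_norm_sq]
    simp [PiLp.inner_apply]
    rw [EuclideanSpace.real_norm_sq_eq]
    simp [sq]
  have hlapl : lapl n (fun x' => Efun n s x' y) x
      = (C*(2*p)) * ((n:ℝ) * r^(p-1) + (p-1)*r^(p-1-1) * (2 * ‖x‖^2)) := by
    unfold lapl
    rw [Finset.sum_congr rfl fun i _ => hsec i]
    have hterm : ∀ i : Fin n,
        C*(2*p) * (r^(p-1) + (p-1)*r^(p-1-1) * (2 * (x i * x i)))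
        = C*(2*p)*r^(p-1) + (C*(2*p)*((p-1)*r^(p-1-1)*2)) * (x i * x i) :=
      fun i => by ring
    rw [Finset.sum_congr rfl fun i _ => hterm i, Finset.sum_add_distrib,
      Finset.sum_const, Finset.card_univ, Fintype.card_fin, ← Finset.mul_sum, hxs,
      nsmul_eq_mul]
    ring
  -- final algebra
  rw [hderiv2, hderiv1, hlapl]
  have hx2 : ‖x‖^2 = r - y^2 := by rw [hrdef]; ring
  have hr1 : r^(p-1-1) = r^(p-1) / r := by
    rw [Real.rpow_sub hr0, Real.rpow_one]
  rw [hx2, hr1, hpdef]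
  field_simp
  ring
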